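/- Let n, t with 1 ≤ t < n−1, s : Fin n → ℝ nonnegative nonincreasing with s 1 > 0. Suppose v : Fin n → ℝ is nonnegative, nonincreasing, feasible, and minimizes ∑_i v i among feasible nonincreasing nonnegative vectors. Then the first constraint is tight: v 1 + ∑_{i=t+2}^{n} v i = s 1. -/

import Mathlib

open Finset

lemma fin_add_le_of_strictMono {m n : ℕ} (f : Fin m → Fin n) (hf : StrictMono f) :
    ∀ (d : ℕ) (i j : Fin m), i.val + d = j.val → (f i).val + d ≤ (f j).val := by
  intro d
  induction d with
  | zero =>
    intro i j h
    have hij : i = j := Fin.ext (by omega)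
    subst hij; omega
  | succ d ih =>
    intro i j h
    have hj1 : j.val - 1 < m := by omega
    have h1 := ih i ⟨j.val - 1, hj1⟩ (by simp; omega)
    have h2 : f ⟨j.val - 1, hj1⟩ < f j := hf (by simp [Fin.lt_def]; omega)
    have h3 : (f ⟨j.val - 1, hj1⟩).val < (f j).val := h2
    omega

lemma sum_smallest_le {n : ℕ} (m : ℕ) (hm : m ≤ n) (w : Fin n → ℝ)
    (hmono : ∀ i j : Fin n, i ≤ j → w j ≤ w i)
    (S : Finset (Fin n)) (hS : S.card = m) :
    ∑ i ∈ Finset.univ.filter (fun i : Fin n => n - m ≤ i.val), w i ≤ ∑ i ∈ S, w i := by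
  rcases Nat.eq_zero_or_pos m with hm0 | hm1
  · subst hm0
    have hSe : S = ∅ := Finset.card_eq_zero.1 hS
    have hf : Finset.univ.filter (fun i : Fin n => n - 0 ≤ i.val) = (∅ : Finset (Fin n)) := by
      ext i
      simp only [Finset.mem_filter, Finset.mem_univ, true_and, Finset.notMem_empty, iff_false]
      have := i.isLt; omega
    rw [hSe, hf]
  · set e := S.orderEmbOfFin hS with he
    have key : ∀ i : Fin m, (e i).val ≤ n - m + i.val := by
      intro i
      have hlast : m - 1 < m := by omega
      have h1 := fin_add_le_of_strictMono (fun x => e x) e.strictMono (m - 1 - i.val) i ⟨m - 1, hlast⟩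
        (by simp; omega)
      have h2 : (e ⟨m - 1, hlast⟩).val < n := (e ⟨m - 1, hlast⟩).isLt
      have h3 : i.val < m := i.isLt
      omega
    have hmap1 : Finset.univ.map e.toEmbedding = S := by
      ext x
      simp only [Finset.mem_map, Finset.mem_univ, true_and]
      constructor
      · rintro ⟨i, rfl⟩; exact Finset.orderEmbOfFin_mem S hS i
      · intro hx
        have : x ∈ Set.range e := by
          rw [he, Finset.range_orderEmbOfFin]; exact hx
        obtain ⟨i, hi⟩ := this
        exact ⟨i, hi⟩
    let g : Fin m ↪ Fin n := ⟨fun i => ⟨n - m + i.val, by omega⟩, by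
      intro a b hab
      have : n - m + a.val = n - m + b.val := congrArg Fin.val hab
      exact Fin.ext (by omega)⟩
    have hgval : ∀ i : Fin m, (g i).val = n - m + i.val := fun i => rfl
    have hmap2 : Finset.univ.map g = Finset.univ.filter (fun i : Fin n => n - m ≤ i.val) := by
      ext x
      simp only [Finset.mem_map, Finset.mem_univ, true_and, Finset.mem_filter]
      constructor
      · rintro ⟨i, rfl⟩
        rw [hgval]
        omega
      · intro hx
        have hxv := x.isLt
        refine ⟨⟨x.val - (n - m), by omega⟩, ?_⟩
        apply Fin.ext
        rw [hgval]
        simp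
        omega
    calc ∑ i ∈ Finset.univ.filter (fun i : Fin n => n - m ≤ i.val), w i
        = ∑ i ∈ Finset.univ.map g, w i := by rw [hmap2]
      _ = ∑ i : Fin m, w (g i) := Finset.sum_map _ _ _
      _ ≤ ∑ i : Fin m, w (e i) := by
          apply Finset.sum_le_sum
          intro i _
          apply hmono
          rw [Fin.le_def, hgval]
          exact key i
      _ = ∑ i ∈ Finset.univ.map e.toEmbedding, w i := (Finset.sum_map _ _ _).symm
      _ = ∑ i ∈ S, w i := by rw [hmap1]

lemma card_filter_fin (n : ℕ) (p : ℕ → Prop) [DecidablePred p] :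
    (Finset.univ.filter (fun i : Fin n => p i.val)).card = ((Finset.range n).filter p).card := by
  rw [Finset.card_filter, Finset.card_filter, ← Fin.sum_univ_eq_sum_range (fun i => if p i then 1 else 0)]

lemma bound_tail {n t : ℕ} (htn : t ≤ n) (w : Fin n → ℝ)
    (hmono : ∀ i j : Fin n, i ≤ j → w j ≤ w i)
    (A : Finset (Fin n)) (hA : A.card = t) :
    ∑ i ∈ Finset.univ.filter (fun i : Fin n => t ≤ i.val), w i ≤ ∑ i ∈ Aᶜ, w i := by
  have hc : Aᶜ.card = n - t := by
    rw [Finset.card_compl, hA, Fintype.card_fin]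
  have h := sum_smallest_le (n - t) (by omega) w hmono Aᶜ hc
  have he : n - (n - t) = t := by omega
  rw [he] at h
  exact h

lemma bound_j {n t : ℕ} (htn : t + 1 ≤ n) (w : Fin n → ℝ)
    (hmono : ∀ i j : Fin n, i ≤ j → w j ≤ w i)
    (j : Fin n) (A : Finset (Fin n)) (hA : A.card = t) (hjA : j ∉ A) :
    w j + ∑ i ∈ Finset.univ.filter (fun i : Fin n => t + 1 ≤ i.val), w i ≤ ∑ i ∈ Aᶜ, w i := by
  have hjc : j ∈ Aᶜ := Finset.mem_compl.2 hjA
  have hins : Aᶜ = insert j (Aᶜ.erase j) := (Finset.insert_erase hjc).symm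
  rw [hins, Finset.sum_insert (Finset.notMem_erase _ _)]
  have hc : (Aᶜ.erase j).card = n - t - 1 := by
    rw [Finset.card_erase_of_mem hjc, Finset.card_compl, hA, Fintype.card_fin]
  have h := sum_smallest_le (n - t - 1) (by omega) w hmono _ hc
  have he : n - (n - t - 1) = t + 1 := by omega
  rw [he] at h
  exact add_le_add_right h (w j)



theorem stmt4 (n t : ℕ) (ht : 1 ≤ t) (htn : t + 1 < n)
    (s : Fin n → ℝ) (hs0 : ∀ i, 0 ≤ s i)
    (hsmono : ∀ i j : Fin n, i ≤ j → s j ≤ s i)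
    (hs1 : 0 < s ⟨0, by omega⟩)
    (v : Fin n → ℝ) (hv0 : ∀ i, 0 ≤ v i)
    (hvmono : ∀ i j : Fin n, i ≤ j → v j ≤ v i)
    (hfeas : ∀ (j : Fin n) (A : Finset (Fin n)), A.card = t → j ∉ A →
      s j ≤ ∑ i ∈ Aᶜ, v i)
    (hopt : ∀ w : Fin n → ℝ, (∀ i, 0 ≤ w i) →
      (∀ i j : Fin n, i ≤ j → w j ≤ w i) →
      (∀ (j : Fin n) (A : Finset (Fin n)), A.card = t → j ∉ A →
        s j ≤ ∑ i ∈ Aᶜ, w i) →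
      ∑ i, v i ≤ ∑ i, w i) :
    v ⟨0, by omega⟩ + ∑ i ∈ Finset.univ.filter (fun i : Fin n => t + 1 ≤ i.val), v i
      = s ⟨0, by omega⟩ := by
  classical
  set z : Fin n := ⟨0, by omega⟩ with hzdef
  set tf : Fin n := ⟨t, by omega⟩ with htfdef
  have hzval : z.val = 0 := rfl
  have htfval : tf.val = t := rfl
  set T : ℝ := ∑ i ∈ Finset.univ.filter (fun i : Fin n => t + 1 ≤ i.val), v i with hTdef
  show v z + T = s z
  have hzle : ∀ j : Fin n, z ≤ j := by
    intro j; rw [Fin.le_def, hzval]; omega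
  have hsle : ∀ j : Fin n, s j ≤ s z := fun j => hsmono z j (hzle j)
  have hznt : z ∉ Finset.univ.filter (fun i : Fin n => t + 1 ≤ i.val) := by
    simp only [Finset.mem_filter, Finset.mem_univ, true_and, hzval]; omega
  -- key feasibility consequence: s j ≤ v j + T for j.val ≤ t
  have hjt : ∀ j : Fin n, j.val ≤ t → s j ≤ v j + T := by
    intro j hj
    have hA : (Finset.univ.filter (fun i : Fin n => i.val ≤ t ∧ i.val ≠ j.val)).card = t := by
      have he2 : ((Finset.range n).filter (fun m => m ≤ t ∧ m ≠ j.val)).card = t := by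
        have he : (Finset.range n).filter (fun m => m ≤ t ∧ m ≠ j.val)
            = (Finset.range (t + 1)).erase j.val := by
          ext x
          simp only [Finset.mem_filter, Finset.mem_range, Finset.mem_erase]
          omega
        rw [he, Finset.card_erase_of_mem (by simp only [Finset.mem_range]; omega),
          Finset.card_range]
        omega
      exact (card_filter_fin n (fun m => m ≤ t ∧ m ≠ j.val)).trans he2
    have hjA : j ∉ Finset.univ.filter (fun i : Fin n => i.val ≤ t ∧ i.val ≠ j.val) := by
      simp
    have hfe := hfeas j _ hA hjA
    have hcomp : (Finset.univ.filter (fun i : Fin n => i.val ≤ t ∧ i.val ≠ j.val))ᶜ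
        = insert j (Finset.univ.filter (fun i : Fin n => t + 1 ≤ i.val)) := by
      ext x
      simp only [Finset.mem_compl, Finset.mem_filter, Finset.mem_univ, true_and,
        Finset.mem_insert, Fin.ext_iff]
      omega
    rw [hcomp, Finset.sum_insert (by
      simp only [Finset.mem_filter, Finset.mem_univ, true_and]; omega)] at hfe
    exact hfe
  have h1 : s z ≤ v z + T := hjt z (by rw [hzval]; omega)
  -- tail2 feasibility: s j ≤ ∑_{i ≥ t} v for j.val ≥ t
  have htail2 : ∀ j : Fin n, t ≤ j.val →
      s j ≤ ∑ i ∈ Finset.univ.filter (fun i : Fin n => t ≤ i.val), v i := by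
    intro j hj
    have hA : (Finset.univ.filter (fun i : Fin n => i.val < t)).card = t := by
      have he2 : ((Finset.range n).filter (fun m => m < t)).card = t := by
        have he : (Finset.range n).filter (fun m => m < t) = Finset.range t := by
          ext x; simp only [Finset.mem_filter, Finset.mem_range]; omega
        rw [he, Finset.card_range]
      exact (card_filter_fin n (fun m => m < t)).trans he2
    have hfe := hfeas j _ hA (by
      simp only [Finset.mem_filter, Finset.mem_univ, true_and]; omega)
    have hcomp : (Finset.univ.filter (fun i : Fin n => i.val < t))ᶜ
        = Finset.univ.filter (fun i : Fin n => t ≤ i.val) := by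
      ext x
      simp only [Finset.mem_compl, Finset.mem_filter, Finset.mem_univ, true_and]
      omega
    rwa [hcomp] at hfe
  refine le_antisymm ?_ h1
  by_contra hgt
  push_neg at hgt
  by_cases hvt : v tf < v z
  · -- Case 1: some strict decrease before index t
    have hex : ∃ m : ℕ, ∃ hm : m < n, v ⟨m, hm⟩ < v z := ⟨t, by omega, hvt⟩
    set k := Nat.find hex with hkdef
    obtain ⟨hkn, hkv⟩ := Nat.find_spec hex
    have hkt : k ≤ t := Nat.find_min' hex ⟨by omega, hvt⟩
    set kf : Fin n := ⟨k, hkn⟩ with hkfdef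
    have hkfval : kf.val = k := rfl
    have hk1 : 1 ≤ k := by
      rcases Nat.eq_zero_or_pos k with h0 | h1
      · exfalso
        have hkz : kf = z := Fin.ext (by rw [hkfval, hzval]; omega)
        rw [hkz] at hkv
        exact lt_irrefl _ hkv
      · exact h1
    have hconst : ∀ i : Fin n, i.val < k → v i = v z := by
      intro i hi
      have h2 := Nat.find_min hex (m := i.val) hi
      push_neg at h2
      have h3 := h2 i.isLt
      simp only [Fin.eta] at h3
      exact le_antisymm (hvmono z i (hzle i)) h3
    set ε : ℝ := min (v z + T - s z) (v z - v kf) with hεdef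
    have hε : 0 < ε := lt_min (by linarith) (by linarith)
    have hεs : ε ≤ v z + T - s z := min_le_left _ _
    have hεk : ε ≤ v z - v kf := min_le_right _ _
    set W : Fin n → ℝ := fun i => if i.val < k then v i - ε else v i with hWdef
    have hWeq1 : ∀ i : Fin n, i.val < k → W i = v z - ε := by
      intro i hi
      simp only [hWdef, if_pos hi, hconst i hi]
    have hWeq2 : ∀ i : Fin n, ¬ i.val < k → W i = v i := by
      intro i hi
      simp only [hWdef, if_neg hi]
    have hw0 : ∀ i, 0 ≤ W i := by
      intro i
      by_cases hi : i.val < k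
      · rw [hWeq1 i hi]
        have := hv0 kf
        linarith
      · rw [hWeq2 i hi]; exact hv0 i
    have hwmono : ∀ i j : Fin n, i ≤ j → W j ≤ W i := by
      intro i j hij
      have hij' : i.val ≤ j.val := hij
      by_cases hi : i.val < k <;> by_cases hj : j.val < k
      · rw [hWeq1 i hi, hWeq1 j hj]
      · rw [hWeq1 i hi, hWeq2 j hj]
        have h4 : v j ≤ v kf := hvmono kf j (by rw [Fin.le_def, hkfval]; omega)
        linarith
      · omega
      · rw [hWeq2 i hi, hWeq2 j hj]; exact hvmono i j hij
    have hWtail : ∑ i ∈ Finset.univ.filter (fun i : Fin n => t + 1 ≤ i.val), W i = T := by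
      rw [hTdef]
      apply Finset.sum_congr rfl
      intro i hi
      simp only [Finset.mem_filter, Finset.mem_univ, true_and] at hi
      exact hWeq2 i (by omega)
    have hWtail2 : ∑ i ∈ Finset.univ.filter (fun i : Fin n => t ≤ i.val), W i
        = ∑ i ∈ Finset.univ.filter (fun i : Fin n => t ≤ i.val), v i := by
      apply Finset.sum_congr rfl
      intro i hi
      simp only [Finset.mem_filter, Finset.mem_univ, true_and] at hi
      exact hWeq2 i (by omega)
    have hwfeas : ∀ (j : Fin n) (A : Finset (Fin n)), A.card = t → j ∉ A →
        s j ≤ ∑ i ∈ Aᶜ, W i := by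
      intro j A hA hjA
      by_cases hjt' : j.val ≤ t
      · have hb := bound_j (by omega) W hwmono j A hA hjA
        rw [hWtail] at hb
        by_cases hjk : j.val < k
        · rw [hWeq1 j hjk] at hb
          have := hsle j
          linarith
        · rw [hWeq2 j hjk] at hb
          have := hjt j hjt'
          linarith
      · have hb := bound_tail (by omega) W hwmono A hA
        rw [hWtail2] at hb
        have := htail2 j (by omega)
        linarith
    have hWle : ∀ i : Fin n, W i ≤ v i := by
      intro i
      by_cases hi : i.val < k
      · rw [hWeq1 i hi, hconst i hi]; linarith
      · rw [hWeq2 i hi]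
    have hWz : W z < v z := by
      rw [hWeq1 z (by rw [hzval]; omega)]
      linarith
    have hsum : ∑ i, W i < ∑ i, v i :=
      Finset.sum_lt_sum (fun i _ => hWle i) ⟨z, Finset.mem_univ z, hWz⟩
    have := hopt W hw0 hwmono hwfeas
    linarith
  · -- Case 2: v is constant on 0..t, scale down
    have hvteq : v tf = v z := le_antisymm (hvmono z tf (hzle tf)) (not_lt.1 hvt)
    have htail2v : ∑ i ∈ Finset.univ.filter (fun i : Fin n => t ≤ i.val), v i = v tf + T := by
      have hins : Finset.univ.filter (fun i : Fin n => t ≤ i.val)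
          = insert tf (Finset.univ.filter (fun i : Fin n => t + 1 ≤ i.val)) := by
        ext x
        simp only [Finset.mem_filter, Finset.mem_univ, true_and, Finset.mem_insert,
          Fin.ext_iff, htfval]
        omega
      rw [hins, Finset.sum_insert (by
        simp only [Finset.mem_filter, Finset.mem_univ, true_and, htfval]; omega), hTdef]
    have hs1' : 0 < s z := hs1
    have hvzT : 0 < v z + T := lt_of_lt_of_le hs1' h1
    set c : ℝ := s z / (v z + T) with hcdef
    have hc0 : 0 ≤ c := div_nonneg (hs0 z) (le_of_lt hvzT)
    have hc1 : c < 1 := (div_lt_one hvzT).2 hgt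
    have hcmul : c * (v z + T) = s z := div_mul_cancel₀ _ (ne_of_gt hvzT)
    set W : Fin n → ℝ := fun i => c * v i with hWdef
    have hw0 : ∀ i, 0 ≤ W i := fun i => mul_nonneg hc0 (hv0 i)
    have hwmono : ∀ i j : Fin n, i ≤ j → W j ≤ W i := fun i j hij =>
      mul_le_mul_of_nonneg_left (hvmono i j hij) hc0
    have hwfeas : ∀ (j : Fin n) (A : Finset (Fin n)), A.card = t → j ∉ A →
        s j ≤ ∑ i ∈ Aᶜ, W i := by
      intro j A hA hjA
      have hb := bound_tail (by omega) W hwmono A hA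
      have hsum2 : ∑ i ∈ Finset.univ.filter (fun i : Fin n => t ≤ i.val), W i
          = c * (v z + T) := by
        simp only [hWdef]
        rw [← Finset.mul_sum, htail2v, hvteq]
      rw [hsum2, hcmul] at hb
      exact le_trans (hsle j) hb
    have hvpos : 0 < ∑ i, v i := by
      have hsub : v z + T ≤ ∑ i, v i := by
        have hins : ∑ i ∈ insert z (Finset.univ.filter (fun i : Fin n => t + 1 ≤ i.val)), v i
            = v z + T := by
          rw [Finset.sum_insert hznt, hTdef]
        rw [← hins]
        apply Finset.sum_le_sum_of_subset_of_nonneg (Finset.subset_univ _)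
        intro i _ _
        exact hv0 i
      linarith
    have hsum : ∑ i, W i < ∑ i, v i := by
      have : ∑ i, W i = c * ∑ i, v i := by
        simp only [hWdef]; rw [← Finset.mul_sum]
      rw [this]
      nlinarith
    have := hopt W hw0 hwmono hwfeas
    linarith
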